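/- White's stratification theorem, countability part: under the Structural Hypotheses (i') and (ii') of White's setting, the stratum Σ_0 is countable. -/

import Mathlib

open Metric MeasureTheory Set Filter

noncomputable section

/-- A function `g : ℝⁿ → [0,∞)` is conical if it is upper semicontinuous and, whenever
`g(z) = g(0)`, it is positively 0-homogeneous with respect to `z`. -/
def IsConical {n : ℕ} (g : EuclideanSpace ℝ (Fin n) → ℝ) : Prop :=
  UpperSemicontinuous g ∧ (∀ x, 0 ≤ g x) ∧
    ∀ z, g z = g 0 → ∀ (x : EuclideanSpace ℝ (Fin n)) (lam : ℝ), 0 < lam →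
      g (z + lam • x) = g (z + x)

/-- A class `𝒢` of conical functions is compact if every sequence in `𝒢` admits a
subsequence `(g_{i_j})` and a limit `g ∈ 𝒢` with
`limsup_j g_{i_j}(y_j) ≤ g(y)` whenever `y_j → y`. -/
def IsCompactClass {n : ℕ} (G : Set (EuclideanSpace ℝ (Fin n) → ℝ)) : Prop :=
  ∀ g : ℕ → (EuclideanSpace ℝ (Fin n) → ℝ), (∀ i, g i ∈ G) →
    ∃ φ : ℕ → ℕ, StrictMono φ ∧ ∃ g' ∈ G,
      ∀ (y : EuclideanSpace ℝ (Fin n)) (ys : ℕ → EuclideanSpace ℝ (Fin n)),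
        Tendsto ys atTop (nhds y) →
        limsup (fun j => g (φ j) (ys j)) atTop ≤ g' y

/-- The spine `S_g := {z : g(z) = g(0)}` of a conical function. -/
def spine {n : ℕ} (g : EuclideanSpace ℝ (Fin n) → ℝ) : Set (EuclideanSpace ℝ (Fin n)) :=
  {z | g z = g 0}

/-- The dimension of the spine of `g` (for a conical `g` the spine is a linear subspace,
so we take the dimension of its span). -/
def spineDim {n : ℕ} (g : EuclideanSpace ℝ (Fin n) → ℝ) : ℕ :=
  Module.finrank ℝ (Submodule.span ℝ (spine g))

/-- The stratum `Σ_ℓ := {x ∈ Ω : f(x) > 0 and d(x) ≤ ℓ}`, where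
`d(x) = sup {dim S_g : g ∈ 𝒢(x)}`. -/
def whiteStratum {n : ℕ} (Ω : Set (EuclideanSpace ℝ (Fin n)))
    (f : EuclideanSpace ℝ (Fin n) → ℝ)
    (G : EuclideanSpace ℝ (Fin n) → Set (EuclideanSpace ℝ (Fin n) → ℝ)) (ℓ : ℕ) :
    Set (EuclideanSpace ℝ (Fin n)) :=
  {x ∈ Ω | 0 < f x ∧ ∀ g ∈ G x, spineDim g ≤ ℓ}

/-- White's Structural Hypothesis (ii'): for every `x ∈ Ω` and every sequence `r_i ↓ 0`
there are a subsequence `r_{i_j} ↓ 0` and `g ∈ 𝒢(x)` such that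
`limsup_j f(x + r_{i_j} y_j) ≤ g(y)` for all `y, y_j ∈ B_1` with `y_j → y`. -/
def WhiteHypII {n : ℕ} (Ω : Set (EuclideanSpace ℝ (Fin n)))
    (f : EuclideanSpace ℝ (Fin n) → ℝ)
    (G : EuclideanSpace ℝ (Fin n) → Set (EuclideanSpace ℝ (Fin n) → ℝ)) : Prop :=
  ∀ x ∈ Ω, ∀ r : ℕ → ℝ, (∀ i, 0 < r i) → StrictAnti r → Tendsto r atTop (nhds 0) →
    ∃ φ : ℕ → ℕ, StrictMono φ ∧ ∃ g ∈ G x,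
      ∀ y ∈ ball (0 : EuclideanSpace ℝ (Fin n)) 1,
      ∀ ys : ℕ → EuclideanSpace ℝ (Fin n),
        (∀ j, ys j ∈ ball (0 : EuclideanSpace ℝ (Fin n)) 1) →
        Tendsto ys atTop (nhds y) →
        limsup (fun j => f (x + r (φ j) • ys j)) atTop ≤ g y

/-- White's stratification theorem, countability part: under the Structural Hypotheses
(i') and (ii'), the stratum `Σ_0` is countable. -/
theorem white_stratification_countable {n : ℕ} (Ω : Set (EuclideanSpace ℝ (Fin n)))
    (hΩo : IsOpen Ω) (hΩb : Bornology.IsBounded Ω)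
    (f : EuclideanSpace ℝ (Fin n) → ℝ)
    (hf_usc : UpperSemicontinuousOn f Ω) (hf_nonneg : ∀ x ∈ Ω, 0 ≤ f x)
    (G : EuclideanSpace ℝ (Fin n) → Set (EuclideanSpace ℝ (Fin n) → ℝ))
    (hG_conical : ∀ x ∈ Ω, ∀ g ∈ G x, IsConical g)
    (hG_compact : ∀ x ∈ Ω, IsCompactClass (G x))
    (hI' : ∀ x ∈ Ω, ∀ g ∈ G x, g 0 = f x)
    (hII' : WhiteHypII Ω f G) :
    (whiteStratum Ω f G 0).Countable := by
  classical
  -- Step 1: separation property at each point of the stratum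
  have sep : ∀ x ∈ whiteStratum Ω f G 0, ∃ ε : ℝ, 0 < ε ∧ ∃ δ : ℝ, 0 < δ ∧
      ∀ y, dist y x < δ → y ≠ x → f y ≤ f x - ε := by
    intro x hx
    obtain ⟨hxΩ, hfx, hdim⟩ := hx
    by_contra hcon
    push_neg at hcon
    have key : ∀ (j : ℕ) (c : ℝ), 0 < c → ∃ y : EuclideanSpace ℝ (Fin n),
        y ≠ x ∧ dist y x < c ∧ dist y x < 1 / ((j : ℝ) + 1) ∧
          f x - 1 / ((j : ℝ) + 1) < f y := by
      intro j c hc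
      obtain ⟨y, h1, h2, h3⟩ := hcon (1 / ((j : ℝ) + 1)) (by positivity)
        (min c (1 / ((j : ℝ) + 1))) (by positivity)
      exact ⟨y, h2, lt_of_lt_of_le h1 (min_le_left _ _),
        lt_of_lt_of_le h1 (min_le_right _ _), h3⟩
    choose Y hY1 hY2 hY3 hY4 using key
    let u : ℕ → {y : EuclideanSpace ℝ (Fin n) // y ≠ x} := fun j =>
      Nat.rec ⟨Y 0 1 one_pos, hY1 0 1 one_pos⟩
        (fun j p => ⟨Y (j + 1) (dist p.1 x) (dist_pos.mpr p.2),
          hY1 (j + 1) (dist p.1 x) (dist_pos.mpr p.2)⟩) j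
    have hu_succ : ∀ j, dist (u (j + 1)).1 x < dist (u j).1 x :=
      fun j => hY2 (j + 1) (dist (u j).1 x) (dist_pos.mpr (u j).2)
    have hu_small : ∀ j, dist (u j).1 x < 1 / ((j : ℝ) + 1) := by
      intro j
      cases j with
      | zero => exact hY3 0 1 one_pos
      | succ j => exact hY3 (j + 1) (dist (u j).1 x) (dist_pos.mpr (u j).2)
    have hu_f : ∀ j : ℕ, f x - 1 / ((j : ℝ) + 1) < f (u j).1 := by
      intro j
      cases j with
      | zero => exact hY4 0 1 one_pos
      | succ j => exact hY4 (j + 1) (dist (u j).1 x) (dist_pos.mpr (u j).2)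
    set d : ℕ → ℝ := fun j => dist (u j).1 x with hd_def
    have hd_pos : ∀ j, 0 < d j := fun j => dist_pos.mpr (u j).2
    have hd_anti : StrictAnti d := strictAnti_nat_of_succ_lt hu_succ
    have hd_tend : Tendsto d atTop (nhds 0) :=
      squeeze_zero (fun j => dist_nonneg) (fun j => le_of_lt (hu_small j))
        tendsto_one_div_add_atTop_nhds_zero_nat
    have hu_tend : Tendsto (fun j => (u j).1) atTop (nhds x) :=
      tendsto_iff_dist_tendsto_zero.2 hd_tend
    set r : ℕ → ℝ := fun j => 2 * d j with hr_def
    have hr_pos : ∀ j, 0 < r j := fun j => by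
      have := hd_pos j; simp only [hr_def]; linarith
    have hr_anti : StrictAnti r := fun a b hab => by
      have := hd_anti hab; simp only [hr_def]; linarith
    have hr_tend : Tendsto r atTop (nhds 0) := by
      have := hd_tend.const_mul 2
      simpa using this
    set ys0 : ℕ → EuclideanSpace ℝ (Fin n) := fun j => (r j)⁻¹ • ((u j).1 - x)
      with hys0_def
    have hys0_norm : ∀ j, ‖ys0 j‖ = 1 / 2 := by
      intro j
      have hdj := hd_pos j
      have hdist : ‖(u j).1 - x‖ = d j := by rw [hd_def, ← dist_eq_norm]
      simp only [hys0_def, norm_smul, Real.norm_eq_abs, hdist,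
        abs_of_pos (inv_pos.mpr (hr_pos j)), hr_def]
      field_simp
      rw [abs_of_pos (by positivity : (0:ℝ) < 1 / (2 * d j))]
      field_simp
    have hys0_sphere : ∀ j, ys0 j ∈ Metric.sphere (0 : EuclideanSpace ℝ (Fin n)) (1 / 2) := by
      intro j
      rw [mem_sphere_zero_iff_norm]
      exact hys0_norm j
    obtain ⟨y₀, hy₀mem, ψ, hψ, hψtend⟩ :=
      tendsto_subseq_of_bounded Metric.isBounded_sphere hys0_sphere
    rw [Metric.isClosed_sphere.closure_eq] at hy₀mem
    have hy₀norm : ‖y₀‖ = 1 / 2 := mem_sphere_zero_iff_norm.mp hy₀mem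
    have hy₀ne : y₀ ≠ 0 := by
      intro h; rw [h, norm_zero] at hy₀norm; norm_num at hy₀norm
    obtain ⟨φ, hφ, g, hgG, hg⟩ := hII' x hxΩ (r ∘ ψ) (fun i => hr_pos _)
      (hr_anti.comp_strictMono hψ) (hr_tend.comp hψ.tendsto_atTop)
    have hy₀ball : y₀ ∈ ball (0 : EuclideanSpace ℝ (Fin n)) 1 := by
      rw [mem_ball, dist_zero_right, hy₀norm]; norm_num
    have hballs : ∀ j, ys0 (ψ (φ j)) ∈ ball (0 : EuclideanSpace ℝ (Fin n)) 1 := by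
      intro j
      rw [mem_ball, dist_zero_right, hys0_norm]; norm_num
    have htends : Tendsto (fun j => ys0 (ψ (φ j))) atTop (nhds y₀) :=
      hψtend.comp hφ.tendsto_atTop
    have hlimsup := hg y₀ hy₀ball (fun j => ys0 (ψ (φ j))) hballs htends
    have hval : ∀ j, x + (r ∘ ψ) (φ j) • ys0 (ψ (φ j)) = (u (ψ (φ j))).1 := by
      intro j
      have hk := hr_pos (ψ (φ j))
      simp only [hys0_def, Function.comp_apply, smul_smul,
        mul_inv_cancel₀ (ne_of_gt hk), one_smul]
      abel
    have hfun : (fun j => f (x + (r ∘ ψ) (φ j) • ys0 (ψ (φ j))))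
        = fun j => f ((u (ψ (φ j))).1) := funext fun j => by rw [hval j]
    rw [hfun] at hlimsup
    have husc := hf_usc x hxΩ (f x + 1) (by linarith)
    rw [nhdsWithin_eq_nhds.mpr (hΩo.mem_nhds hxΩ)] at husc
    have hcomp_tend : Tendsto (fun j => (u (ψ (φ j))).1) atTop (nhds x) :=
      hu_tend.comp ((hψ.comp hφ).tendsto_atTop)
    have hbdd : IsBoundedUnder (· ≤ ·) atTop (fun j => f ((u (ψ (φ j))).1)) :=
      isBoundedUnder_of_eventually_le ((hcomp_tend.eventually husc).mono
        (fun j hj => le_of_lt hj))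
    have hL : f x ≤ limsup (fun j => f ((u (ψ (φ j))).1)) atTop := by
      apply le_of_forall_sub_le
      intro ε hε
      have hev : ∀ᶠ j : ℕ in atTop, f x - ε ≤ f ((u (ψ (φ j))).1) := by
        filter_upwards [tendsto_one_div_add_atTop_nhds_zero_nat.eventually_lt_const hε]
          with j hj
        have h1 : (j : ℝ) ≤ (ψ (φ j) : ℝ) := by
          exact_mod_cast le_trans hφ.le_apply hψ.le_apply
        have h2 : 1 / ((ψ (φ j) : ℝ) + 1) ≤ 1 / ((j : ℝ) + 1) :=
          one_div_le_one_div_of_le (by positivity) (by linarith)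
        have h3 := hu_f (ψ (φ j))
        linarith
      exact le_limsup_of_frequently_le hev.frequently hbdd
    have hfg : f x ≤ g y₀ := le_trans hL hlimsup
    have hg0 : g 0 = f x := hI' x hxΩ g hgG
    obtain ⟨husc_g, hg_nonneg, hg_hom⟩ := hG_conical x hxΩ g hgG
    -- g y₀ ≤ g 0 by 0-homogeneity and upper semicontinuity at 0
    have hgle : g y₀ ≤ g 0 := by
      by_contra hlt
      push_neg at hlt
      have hev0 := husc_g 0 (g y₀) hlt
      have htend0 : Tendsto (fun k : ℕ => (1 / ((k : ℝ) + 1)) • y₀) atTop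
          (nhds (0 : EuclideanSpace ℝ (Fin n))) := by
        have := (tendsto_one_div_add_atTop_nhds_zero_nat (𝕜 := ℝ)).smul_const y₀
        simpa using this
      obtain ⟨k, hk⟩ := (htend0.eventually hev0).exists
      have heq : g ((1 / ((k : ℝ) + 1)) • y₀) = g y₀ := by
        have := hg_hom 0 rfl y₀ (1 / ((k : ℝ) + 1)) (by positivity)
        simpa using this
      rw [heq] at hk
      exact lt_irrefl _ hk
    have hy₀spine : y₀ ∈ spine g := by
      have : g y₀ = g 0 := le_antisymm hgle (by rw [hg0]; exact hfg)
      exact this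
    have hspan : (Submodule.span ℝ ({y₀} : Set (EuclideanSpace ℝ (Fin n)))) ≤
        Submodule.span ℝ (spine g) :=
      Submodule.span_le.mpr (Set.singleton_subset_iff.mpr (Submodule.subset_span hy₀spine))
    have h1 : 1 ≤ spineDim g := by
      have hfin : Module.finrank ℝ (Submodule.span ℝ ({y₀} : Set (EuclideanSpace ℝ (Fin n)))) = 1 :=
        finrank_span_singleton hy₀ne
      calc 1 = Module.finrank ℝ (Submodule.span ℝ ({y₀} : Set (EuclideanSpace ℝ (Fin n)))) :=
            hfin.symm
        _ ≤ spineDim g := Submodule.finrank_mono hspan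
    have h0 := hdim g hgG
    omega
  -- Step 2: countability via rational parameters and separated sets
  obtain ⟨s, hs_count, hs_dense⟩ :=
    TopologicalSpace.exists_countable_dense (EuclideanSpace ℝ (Fin n))
  set A : ℝ → ℝ → Set (EuclideanSpace ℝ (Fin n)) := fun q δ =>
    {x | q < f x ∧ ∀ y, dist y x < δ → y ≠ x → f y < q} with hA_def
  have hA_count : ∀ (q δ : ℝ), 0 < δ → (A q δ).Countable := by
    intro q δ hδ
    have hchoice : ∀ a : EuclideanSpace ℝ (Fin n), ∃ p, p ∈ s ∧ dist a p < δ / 2 := by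
      intro a
      obtain ⟨p, hp, hdp⟩ := hs_dense.exists_dist_lt a (half_pos hδ)
      exact ⟨p, hp, hdp⟩
    choose p hp hpd using hchoice
    apply MapsTo.countable_of_injOn (f := p) (fun a _ => hp a) ?_ hs_count
    intro a ha b hb hab
    by_contra hne
    have hdab : dist a b < δ := by
      calc dist a b ≤ dist a (p a) + dist (p a) b := dist_triangle _ _ _
        _ = dist a (p a) + dist b (p b) := by rw [hab, dist_comm (p b) b]
        _ < δ / 2 + δ / 2 := add_lt_add (hpd a) (hpd b)
        _ = δ := by ring
    have h1 : f b < q := ha.2 b (by rw [dist_comm]; exact hdab) (Ne.symm hne)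
    have h2 : q < f b := hb.1
    linarith
  have hmain : whiteStratum Ω f G 0 ⊆
      ⋃ (q : ℚ) (dq : {dq : ℚ // 0 < dq}), A (q : ℝ) ((dq : ℚ) : ℝ) := by
    intro x hx
    obtain ⟨ε, hε, δ, hδ, hsep⟩ := sep x hx
    obtain ⟨hxΩ, hfx, hdim⟩ := hx
    obtain ⟨q, hq1, hq2⟩ := exists_rat_btwn (show f x - ε < f x by linarith)
    obtain ⟨dq, hdq1, hdq2⟩ := exists_rat_btwn hδ
    have hdqpos : 0 < dq := by exact_mod_cast hdq1
    refine mem_iUnion.mpr ⟨q, mem_iUnion.mpr ⟨⟨dq, hdqpos⟩, ?_⟩⟩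
    refine ⟨hq2, fun y hy hyne => ?_⟩
    have := hsep y (lt_trans hy hdq2) hyne
    linarith
  refine Set.Countable.mono hmain ?_
  exact Set.countable_iUnion fun q => Set.countable_iUnion fun dq =>
    hA_count _ _ (by exact_mod_cast dq.2)
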